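/- Define for m ≥ 1 and 0 ≤ k ≤ m-1: b_{-1}^{(m)} = Z(m+1)/(12√3·Z(m)) and b_k^{(m)} = Z(k+1)·Z(m-k)/Z(m). Then for each m ≥ 2, b_{-1}^{(m)} + Σ_{k=0}^{m-1} b_k^{(m)} + 1_{m=2}/Z(2) = 1, i.e. the one-step peeling transition probabilities sum to 1 (where the term 1/Z(2) appears only for m = 2). -/

import Mathlib

open Finset

/-- `Z(1) = (2-√3)/4` and `Z(p) = 6^p·(2p-5)!!/(8√3·p!)` for `p ≥ 2`. -/
noncomputable def Zfun : ℕ → ℝ := fun p =>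
  if p = 1 then (2 - Real.sqrt 3) / 4
  else 6 ^ p * Nat.doubleFactorial (2 * p - 5) / (8 * Real.sqrt 3 * Nat.factorial p)

/-- Normalized Catalan numbers. -/
noncomputable def Gc : ℕ → ℝ := fun a => (catalan a : ℝ) / (a + 2)

lemma catalan_pos' (a : ℕ) : 0 < catalan a := by
  have h := a.centralBinom_pos
  rw [← succ_mul_catalan_eq_centralBinom a] at h
  by_contra hc; push_neg at hc; interval_cases (catalan a); omega

lemma Gc_pos (a : ℕ) : 0 < Gc a := by
  have := catalan_pos' a
  unfold Gc
  have h0 : (0:ℝ) < (catalan a : ℝ) := by exact_mod_cast this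
  positivity

lemma six_Gc (a : ℕ) :
    6 * Gc a = 4 * (catalan a : ℝ) - (catalan (a + 1) : ℝ) := by
  have h1 : ((a : ℝ) + 1) * catalan a = Nat.centralBinom a := by
    exact_mod_cast congrArg (Nat.cast : ℕ → ℝ) (succ_mul_catalan_eq_centralBinom a)
  have h2 : ((a : ℝ) + 2) * catalan (a + 1) = Nat.centralBinom (a + 1) := by
    have := succ_mul_catalan_eq_centralBinom (a + 1)
    push_cast [← this]; ring
  have h3 : ((a : ℝ) + 1) * Nat.centralBinom (a + 1)
      = 2 * (2 * a + 1) * Nat.centralBinom a := by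
    exact_mod_cast congrArg (Nat.cast : ℕ → ℝ) (Nat.succ_mul_centralBinom_succ a)
  have key : ((a : ℝ) + 2) * catalan (a + 1) = 2 * (2 * a + 1) * catalan a := by
    have ha1 : ((a : ℝ) + 1) ≠ 0 := by positivity
    have h4 : ((a : ℝ) + 1) * (((a : ℝ) + 2) * catalan (a + 1))
        = ((a : ℝ) + 1) * (2 * (2 * a + 1) * catalan a) := by
      rw [h2]; rw [show ((a:ℝ)+1) * (2 * (2 * (a:ℝ) + 1) * catalan a)
        = 2 * (2 * (a:ℝ) + 1) * (((a:ℝ)+1) * catalan a) by ring, h1]; exact h3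
    exact mul_left_cancel₀ ha1 h4
  have ha2 : ((a : ℝ) + 2) ≠ 0 := by positivity
  unfold Gc
  field_simp
  linarith [key]

lemma cat_conv (n : ℕ) :
    ∑ a ∈ range (n + 1), ((catalan a : ℝ) * (catalan (n - a) : ℝ)) = catalan (n + 1) := by
  rw [catalan_succ n]
  push_cast
  rw [← Fin.sum_univ_eq_sum_range (fun a => ((catalan a : ℝ) * (catalan (n - a) : ℝ)))]

lemma cat_conv1 (n : ℕ) :
    ∑ a ∈ range (n + 1), ((catalan (a + 1) : ℝ) * (catalan (n - a) : ℝ))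
      = catalan (n + 2) - catalan (n + 1) := by
  have h := cat_conv (n + 1)
  rw [Finset.sum_range_succ'] at h
  simp only [Nat.succ_sub_succ, Nat.sub_zero, catalan_zero, Nat.cast_one, one_mul] at h
  linarith

lemma cat_conv2 (n : ℕ) :
    ∑ a ∈ range (n + 1), ((catalan (a + 1) : ℝ) * (catalan (n - a + 1) : ℝ))
      = catalan (n + 3) - 2 * catalan (n + 2) := by
  have h := cat_conv (n + 2)
  rw [Finset.sum_range_succ, Finset.sum_range_succ'] at h
  simp only [Nat.succ_sub_succ, Nat.sub_zero, Nat.sub_self, catalan_zero, Nat.cast_one,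
    one_mul, mul_one] at h
  have e : ∀ a ∈ range (n + 1),
      ((catalan (a + 1) : ℝ) * (catalan (n + 1 - a) : ℝ))
        = (catalan (a + 1) : ℝ) * (catalan (n - a + 1) : ℝ) := by
    intro a ha
    rw [Finset.mem_range] at ha
    have : n + 1 - a = n - a + 1 := by omega
    rw [this]
  rw [Finset.sum_congr rfl e] at h
  linarith

lemma cat_conv2' (n : ℕ) :
    ∑ a ∈ range (n + 1), ((catalan a : ℝ) * (catalan (n - a + 1) : ℝ))
      = ∑ a ∈ range (n + 1), ((catalan (a + 1) : ℝ) * (catalan (n - a) : ℝ)) := by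
  rw [← Finset.sum_range_reflect (fun a => ((catalan (a + 1) : ℝ) * (catalan (n - a) : ℝ)))]
  refine Finset.sum_congr rfl fun a ha => ?_
  rw [Finset.mem_range] at ha
  have h1 : n + 1 - 1 - a = n - a := by omega
  have h2 : n - (n - a) = a := by omega
  rw [h1, h2, mul_comm]

lemma Gc_conv (n : ℕ) :
    ∑ a ∈ range (n + 1), Gc a * Gc (n - a) = Gc (n + 1) - Gc (n + 2) / 6 := by
  have key : ∀ a ∈ range (n + 1), 36 * (Gc a * Gc (n - a))
      = 16 * ((catalan a : ℝ) * (catalan (n - a) : ℝ))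
        - 4 * ((catalan (a + 1) : ℝ) * (catalan (n - a) : ℝ))
        - 4 * ((catalan a : ℝ) * (catalan (n - a + 1) : ℝ))
        + (catalan (a + 1) : ℝ) * (catalan (n - a + 1) : ℝ) := by
    intro a _
    have h1 := six_Gc a
    have h2 := six_Gc (n - a)
    nlinarith [h1, h2]
  have h36 : 36 * ∑ a ∈ range (n + 1), Gc a * Gc (n - a)
      = 24 * (catalan (n + 1) : ℝ) - 10 * (catalan (n + 2) : ℝ) + (catalan (n + 3) : ℝ) := by
    rw [Finset.mul_sum, Finset.sum_congr rfl key]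
    rw [Finset.sum_add_distrib, Finset.sum_sub_distrib, Finset.sum_sub_distrib,
      ← Finset.mul_sum, ← Finset.mul_sum, ← Finset.mul_sum]
    rw [cat_conv, cat_conv1, cat_conv2, cat_conv2', cat_conv1]
    ring
  have h1 := six_Gc (n + 1)
  have h2 := six_Gc (n + 2)
  push_cast at h1 h2 h36 ⊢
  linarith

lemma dfacN (a : ℕ) :
    Nat.doubleFactorial (2 * (a + 2) - 5) * (2 ^ a * Nat.factorial a)
      = Nat.factorial (2 * a) := by
  cases a with
  | zero => rfl
  | succ b =>
    have h : 2 * (b + 1 + 2) - 5 = 2 * b + 1 := by omega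
    have A := Nat.factorial_eq_mul_doubleFactorial (2 * b + 1)
    have B := Nat.doubleFactorial_two_mul (b + 1)
    rw [h, show 2 * (b + 1) = 2 * b + 1 + 1 by ring, A,
      show 2 * b + 1 + 1 = 2 * (b + 1) by ring, B]
    ring

lemma Zfun_eq (a : ℕ) :
    Zfun (a + 2) = 3 * Real.sqrt 3 / 2 * 3 ^ a * Gc a := by
  have hne : a + 2 ≠ 1 := by omega
  have hs : Real.sqrt 3 * Real.sqrt 3 = 3 := Real.mul_self_sqrt (by norm_num)
  have hs0 : Real.sqrt 3 ≠ 0 := by positivity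
  have hD : (Nat.doubleFactorial (2 * (a + 2) - 5) : ℝ) * (2 ^ a * Nat.factorial a)
      = Nat.factorial (2 * a) := by exact_mod_cast congrArg (Nat.cast : ℕ → ℝ) (dfacN a)
  have hC : ((a : ℝ) + 1) * (catalan a : ℝ) * (Nat.factorial a * Nat.factorial a)
      = (Nat.factorial (2 * a) : ℝ) := by
    have hcb : Nat.centralBinom a * (Nat.factorial a * Nat.factorial a)
        = Nat.factorial (2 * a) := by
      have := Nat.choose_mul_factorial_mul_factorial (Nat.le_mul_of_pos_left a (by norm_num) :
        a ≤ 2 * a)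
      simpa [Nat.centralBinom, two_mul, mul_assoc] using this
    have := succ_mul_catalan_eq_centralBinom a
    rw [← this] at hcb
    exact_mod_cast hcb
  have hfact : (Nat.factorial (a + 2) : ℝ)
      = ((a : ℝ) + 2) * ((a : ℝ) + 1) * Nat.factorial a := by
    rw [Nat.factorial_succ, Nat.factorial_succ]; push_cast; ring
  have hp : (6 : ℝ) ^ (a + 2) = 36 * (2 ^ a * 3 ^ a) := by
    rw [pow_add, show (6 : ℝ) = 2 * 3 by norm_num, mul_pow]; ring
  have hfa : (Nat.factorial a : ℝ) ≠ 0 := by positivity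
  have h2a : ((2 : ℝ)) ^ a ≠ 0 := by positivity
  have ha2 : ((a : ℝ) + 2) ≠ 0 := by positivity
  unfold Zfun Gc
  rw [if_neg hne]
  rw [hfact, hp]
  have hD2 : (Nat.doubleFactorial (2 * (a + 2) - 5) : ℝ) * 2 ^ a
      = ((a : ℝ) + 1) * (catalan a : ℝ) * (Nat.factorial a : ℝ) := by
    apply mul_right_cancel₀ hfa
    calc (Nat.doubleFactorial (2 * (a + 2) - 5) : ℝ) * 2 ^ a * Nat.factorial a
        = (Nat.doubleFactorial (2 * (a + 2) - 5) : ℝ) * (2 ^ a * Nat.factorial a) := by ring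
      _ = (Nat.factorial (2 * a) : ℝ) := hD
      _ = ((a : ℝ) + 1) * (catalan a : ℝ) * Nat.factorial a * Nat.factorial a := by
          rw [← hC]; ring
  field_simp
  linear_combination 72 * hD2
    - 24 * ((a:ℝ) + 1) * (catalan a : ℝ) * (Nat.factorial a : ℝ) * hs

/-- The one-step peeling transition probabilities along a cycle of perimeter `m ≥ 2` sum to
`1`: `b₋₁^{(m)} + Σ_{k=0}^{m-1} b_k^{(m)} + 1_{m=2}/Z(2) = 1`, where
`b₋₁^{(m)} = Z(m+1)/(12√3·Z(m))` and `b_k^{(m)} = Z(k+1)·Z(m-k)/Z(m)`. -/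
theorem peeling_transitions_sum (m : ℕ) (hm : 2 ≤ m) :
    Zfun (m + 1) / (12 * Real.sqrt 3 * Zfun m) +
      (∑ k ∈ Finset.range m, Zfun (k + 1) * Zfun (m - k) / Zfun m) +
      (if m = 2 then 1 / Zfun 2 else 0) = 1 := by
  have hs : Real.sqrt 3 * Real.sqrt 3 = 3 := Real.mul_self_sqrt (by norm_num)
  have hsp : 0 < Real.sqrt 3 := Real.sqrt_pos.mpr (by norm_num)
  have hs0 : Real.sqrt 3 ≠ 0 := ne_of_gt hsp
  have hZ1 : Zfun 1 = (2 - Real.sqrt 3) / 4 := by simp [Zfun]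
  rcases eq_or_lt_of_le hm with h2 | h3
  · -- m = 2
    subst h2
    have hZ2 : Zfun 2 = 3 * Real.sqrt 3 / 4 := by
      have := Zfun_eq 0
      norm_num [Gc] at this
      rw [this]; ring
    have hZ3 : Zfun 3 = 3 * Real.sqrt 3 / 2 := by
      have := Zfun_eq 1
      rw [this]
      have : Gc 1 = 1 / 3 := by norm_num [Gc, catalan_one]
      rw [this]; ring
    rw [Finset.sum_range_succ, Finset.sum_range_succ, Finset.sum_range_zero]
    norm_num [hZ1, hZ2, hZ3]
    field_simp
    linear_combination (-144) * hs
  · -- m ≥ 3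
    obtain ⟨n, rfl⟩ : ∃ n, m = n + 3 := ⟨m - 3, by omega⟩
    rw [if_neg (by omega)]
    have hZm : Zfun (n + 3) = 3 * Real.sqrt 3 / 2 * 3 ^ (n + 1) * Gc (n + 1) := by
      have := Zfun_eq (n + 1); rwa [show n + 1 + 2 = n + 3 by ring] at this
    have hZm1 : Zfun (n + 3 + 1) = 3 * Real.sqrt 3 / 2 * 3 ^ (n + 2) * Gc (n + 2) := by
      have := Zfun_eq (n + 2); rwa [show n + 2 + 2 = n + 3 + 1 by ring] at this
    have hZm0 : Zfun (n + 3) ≠ 0 := by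
      rw [hZm]
      have := Gc_pos (n + 1)
      positivity
    have E : Zfun (n + 3 + 1) / (12 * Real.sqrt 3)
        + ∑ k ∈ Finset.range (n + 3), Zfun (k + 1) * Zfun (n + 3 - k) = Zfun (n + 3) := by
      rw [Finset.sum_range_succ, Finset.sum_range_succ']
      have emid : ∀ k ∈ Finset.range (n + 1),
          Zfun (k + 1 + 1) * Zfun (n + 3 - (k + 1))
            = (3 * Real.sqrt 3 / 2) ^ 2 * 3 ^ n * (Gc k * Gc (n - k)) := by
        intro k hk
        rw [Finset.mem_range] at hk
        have h1 : n + 3 - (k + 1) = (n - k) + 2 := by omega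
        have h2 : k + 1 + 1 = k + 2 := by ring
        rw [h1, h2, Zfun_eq, Zfun_eq]
        have h3 : (3:ℝ) ^ k * 3 ^ (n - k) = 3 ^ n := by
          rw [← pow_add]; congr 1; omega
        calc 3 * Real.sqrt 3 / 2 * 3 ^ k * Gc k * (3 * Real.sqrt 3 / 2 * 3 ^ (n - k) * Gc (n - k))
            = (3 * Real.sqrt 3 / 2) ^ 2 * ((3:ℝ) ^ k * 3 ^ (n - k)) * (Gc k * Gc (n - k)) := by
              ring
          _ = _ := by rw [h3]
      rw [Finset.sum_congr rfl emid, ← Finset.mul_sum, Gc_conv]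
      have hlast : n + 3 - (n + 2) = 1 := by omega
      have hfirst : n + 3 - 0 = n + 3 := by omega
      rw [hlast, hfirst, hZm1, hZm, hZ1]
      rw [show (3:ℝ) ^ (n + 2) = 9 * 3 ^ n by rw [pow_add]; ring,
        show (3:ℝ) ^ (n + 1) = 3 * 3 ^ n by rw [pow_add]; ring]
      field_simp
      linear_combination (-144 * Gc (n + 2)) * hs
    calc Zfun (n + 3 + 1) / (12 * Real.sqrt 3 * Zfun (n + 3)) +
          (∑ k ∈ Finset.range (n + 3), Zfun (k + 1) * Zfun (n + 3 - k) / Zfun (n + 3)) + 0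
        = (Zfun (n + 3 + 1) / (12 * Real.sqrt 3)
            + ∑ k ∈ Finset.range (n + 3), Zfun (k + 1) * Zfun (n + 3 - k)) / Zfun (n + 3) := by
          rw [← Finset.sum_div, add_zero, add_div, div_div]
      _ = 1 := by rw [E, div_self hZm0]
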